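/- Let C > 0 and D ∈ ℝ, and let x : ℝ → ℝ be a continuous function such that x t > 1 for every t and li(x t) = C·t + D for every t. Then the function f = log ∘ x satisfies, for every t₀, HasDerivAt f (C · f(t₀) · exp(−f(t₀))) t₀; in other words f(t) = log(li⁻¹(C t + D)) solves the differential equation f′ = C f e^{−f}. -/

import Mathlib

/-- The logarithmic integral `li t = ∫_2^t dτ / log τ`. -/
noncomputable def li (t : ℝ) : ℝ := ∫ τ in (2:ℝ)..t, 1 / Real.log τ

/-- `f(t) = log (li⁻¹ (C t + D))` solves the ODE `f' = C f e^{-f}`. -/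
theorem log_inverse_li_solves_ode
    (C D : ℝ) (hC : 0 < C)
    (x : ℝ → ℝ) (hx : Continuous x) (hx1 : ∀ t, 1 < x t)
    (hli : ∀ t, li (x t) = C * t + D) (t₀ : ℝ) :
    HasDerivAt (fun t => Real.log (x t))
      (C * Real.log (x t₀) * Real.exp (-(Real.log (x t₀)))) t₀ := by
  set y₀ := x t₀ with hy₀
  have hy1 : 1 < y₀ := hx1 t₀
  have hy0 : 0 < y₀ := lt_trans one_pos hy1
  have hlog : 0 < Real.log y₀ := Real.log_pos hy1
  -- integrand
  have hmeas : Measurable fun τ : ℝ => 1 / Real.log τ := by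
    exact measurable_const.div Real.measurable_log
  have hint : IntervalIntegrable (fun τ : ℝ => 1 / Real.log τ)
      MeasureTheory.volume 2 y₀ := by
    apply ContinuousOn.intervalIntegrable
    intro τ hτ
    have h1 : (1 : ℝ) < τ := by
      rcases hτ with ⟨hl, _⟩
      calc (1:ℝ) < min 2 y₀ := by simp [lt_min_iff, hy1]
        _ ≤ τ := hl
    exact (ContinuousAt.continuousWithinAt
      (ContinuousAt.div continuousAt_const
        (Real.continuousAt_log (by linarith)) (ne_of_gt (Real.log_pos h1))))
  have hca : ContinuousAt (fun τ : ℝ => 1 / Real.log τ) y₀ :=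
    ContinuousAt.div continuousAt_const
      (Real.continuousAt_log (by linarith)) (ne_of_gt hlog)
  have hli' : HasDerivAt li (1 / Real.log y₀) y₀ :=
    intervalIntegral.integral_hasDerivAt_right hint
      ⟨Set.univ, Filter.univ_mem, hmeas.aestronglyMeasurable.restrict⟩ hca
  -- F = (li - D) / C is a local left inverse of x
  have hF : HasDerivAt (fun s => (li s - D) / C) (1 / Real.log y₀ / C) y₀ :=
    (hli'.sub_const D).div_const C
  have hF' : (1 / Real.log y₀ / C) ≠ 0 := by positivity
  have hx' : HasDerivAt x (1 / Real.log y₀ / C)⁻¹ t₀ := by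
    apply HasDerivAt.of_local_left_inverse hx.continuousAt hF hF'
    filter_upwards with t
    rw [hli t]
    field_simp
    ring
  have hxne : x t₀ ≠ 0 := ne_of_gt hy0
  have := hx'.log hxne
  convert this using 1
  rw [Real.exp_neg, Real.exp_log hy0]
  field_simp
  ring
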